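/- For each fixed n, the modified unitary Ramanujan sum q ↦ c̃_q(n) is a multiplicative function of q. -/

import Mathlib

def uDivisors (n : ℕ) : Finset ℕ := n.divisors.filter (fun d => Nat.gcd d (n / d) = 1)

def mustar (n : ℕ) : ℤ := (-1) ^ n.primeFactors.card

def gcud (n q : ℕ) : ℕ := (uDivisors n ∩ uDivisors q).sup id

def ctilde (q n : ℕ) : ℤ := ∑ d ∈ uDivisors (gcud n q), (d : ℤ) * mustar (q / d)

lemma mem_uDivisors {d n : ℕ} (hn : n ≠ 0) :
    d ∈ uDivisors n ↔ d ∣ n ∧ Nat.gcd d (n / d) = 1 := by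
  simp [uDivisors, Nat.mem_divisors, hn, and_assoc]

lemma one_mem_uDivisors {n : ℕ} (hn : n ≠ 0) : 1 ∈ uDivisors n := by
  rw [mem_uDivisors hn]
  exact ⟨one_dvd _, Nat.gcd_one_left _⟩

lemma uDivisors_one : uDivisors 1 = {1} := by decide

lemma mustar_one : mustar 1 = 1 := by simp [mustar]

lemma mustar_mul {a b : ℕ} (h : Nat.Coprime a b) :
    mustar (a * b) = mustar a * mustar b := by
  rcases eq_or_ne a 0 with rfl | ha
  · have : b = 1 := by simpa [Nat.Coprime] using h
    simp [this, mustar]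
  rcases eq_or_ne b 0 with rfl | hb
  · have : a = 1 := by simpa [Nat.Coprime] using h
    simp [this, mustar]
  unfold mustar
  rw [Nat.primeFactors_mul ha hb,
    Finset.card_union_of_disjoint (h.disjoint_primeFactors), pow_add]

-- transitivity of unitary divisibility
lemma uDivisors_trans {e d n : ℕ} (hn : n ≠ 0) (hd : d ≠ 0)
    (he : e ∈ uDivisors d) (hdn : d ∈ uDivisors n) : e ∈ uDivisors n := by
  rw [mem_uDivisors hd] at he
  rw [mem_uDivisors hn] at hdn
  rw [mem_uDivisors hn]
  obtain ⟨hed, hge⟩ := he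
  obtain ⟨hdn', hgd⟩ := hdn
  refine ⟨hed.trans hdn', ?_⟩
  have hndiv : n / e = (n / d) * (d / e) := by
    rcases hdn' with ⟨k, rfl⟩
    rcases hed with ⟨m, rfl⟩
    have he0 : 0 < e := Nat.pos_of_ne_zero (by rintro rfl; simp at hd)
    have hm0 : 0 < m := Nat.pos_of_ne_zero (by rintro rfl; simp at hd)
    have h1 : e * m * k / e = m * k := by
      rw [mul_assoc]; exact Nat.mul_div_cancel_left _ he0
    have h2 : e * m * k / (e * m) = k := Nat.mul_div_cancel_left _ (Nat.mul_pos he0 hm0)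
    have h3 : e * m / e = m := Nat.mul_div_cancel_left _ he0
    rw [h1, h2, h3, mul_comm]
  rw [hndiv]
  have h1 : Nat.Coprime e (n / d) :=
    Nat.Coprime.coprime_dvd_left hed hgd
  exact Nat.Coprime.mul_right h1 hge

lemma mul_mem_uDivisors {d₁ d₂ n : ℕ} (hn : n ≠ 0) (hcop : Nat.Coprime d₁ d₂)
    (h₁ : d₁ ∈ uDivisors n) (h₂ : d₂ ∈ uDivisors n) : d₁ * d₂ ∈ uDivisors n := by
  rw [mem_uDivisors hn] at h₁ h₂ ⊢
  obtain ⟨hd₁, hg₁⟩ := h₁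
  obtain ⟨hd₂, hg₂⟩ := h₂
  have hdvd : d₁ * d₂ ∣ n := hcop.mul_dvd_of_dvd_of_dvd hd₁ hd₂
  refine ⟨hdvd, ?_⟩
  have key : ∀ i j : ℕ, i ∣ n → Nat.gcd i (n / i) = 1 → i * j ∣ n →
      Nat.Coprime i (n / (i * j)) := by
    intro i j hi hgi hij
    rcases hij with ⟨k, hk⟩
    have hij0 : 0 < i * j := Nat.pos_of_ne_zero (by rintro h; rw [h, zero_mul] at hk; exact hn hk)
    have hi0 : 0 < i := Nat.pos_of_ne_zero (by rintro rfl; simp at hij0)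
    have h2 : n / (i * j) = k := by rw [hk, Nat.mul_div_cancel_left _ hij0]
    have h3 : n / i = j * k := by rw [hk, mul_assoc, Nat.mul_div_cancel_left _ hi0]
    have hdd : n / (i * j) ∣ n / i := by rw [h2, h3]; exact dvd_mul_left k j
    exact Nat.Coprime.coprime_dvd_right hdd hgi
  have c1 : Nat.Coprime d₁ (n / (d₁ * d₂)) := key d₁ d₂ hd₁ hg₁ hdvd
  have c2 : Nat.Coprime d₂ (n / (d₂ * d₁)) := key d₂ d₁ hd₂ hg₂ (by rwa [mul_comm])
  rw [mul_comm d₂ d₁] at c2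
  exact Nat.Coprime.mul c1 c2

-- decomposition of a unitary divisor of a coprime product
lemma uDivisors_mul_decomp {d a b : ℕ} (ha : a ≠ 0) (hb : b ≠ 0)
    (hab : Nat.Coprime a b) (hd : d ∈ uDivisors (a * b)) :
    Nat.gcd d a ∈ uDivisors a ∧ Nat.gcd d b ∈ uDivisors b ∧
      d = Nat.gcd d a * Nat.gcd d b := by
  have hab0 : a * b ≠ 0 := mul_ne_zero ha hb
  rw [mem_uDivisors hab0] at hd
  obtain ⟨hdvd, hg⟩ := hd
  have heq : Nat.gcd d a * Nat.gcd d b = d :=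
    (Nat.gcd_mul_gcd_eq_iff_dvd_mul_of_coprime hab).mpr hdvd
  set da := Nat.gcd d a with hda
  set db := Nat.gcd d b with hdb
  have hdaa : da ∣ a := Nat.gcd_dvd_right _ _
  have hdbb : db ∣ b := Nat.gcd_dvd_right _ _
  have hquot : a * b / (da * db) = (a / da) * (b / db) :=
    (Nat.div_mul_div_comm hdaa hdbb).symm
  have hcop : Nat.Coprime d (a * b / d) := hg
  rw [← heq, hquot] at hcop
  refine ⟨?_, ?_, heq.symm⟩
  · rw [mem_uDivisors ha]
    refine ⟨hdaa, ?_⟩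
    have h1 : Nat.Coprime da ((a / da) * (b / db)) :=
      Nat.Coprime.coprime_dvd_left (dvd_mul_right da db) hcop
    exact Nat.Coprime.coprime_dvd_right (dvd_mul_right _ _) h1
  · rw [mem_uDivisors hb]
    refine ⟨hdbb, ?_⟩
    have h1 : Nat.Coprime db ((a / da) * (b / db)) :=
      Nat.Coprime.coprime_dvd_left (dvd_mul_left db da) hcop
    exact Nat.Coprime.coprime_dvd_right (dvd_mul_left _ _) h1

lemma mul_mem_uDivisors_mul {da db a b : ℕ} (ha : a ≠ 0) (hb : b ≠ 0)
    (hab : Nat.Coprime a b) (hda : da ∈ uDivisors a) (hdb : db ∈ uDivisors b) :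
    da * db ∈ uDivisors (a * b) := by
  have hab0 : a * b ≠ 0 := mul_ne_zero ha hb
  rw [mem_uDivisors ha] at hda
  rw [mem_uDivisors hb] at hdb
  obtain ⟨hda1, hda2⟩ := hda
  obtain ⟨hdb1, hdb2⟩ := hdb
  rw [mem_uDivisors hab0]
  refine ⟨mul_dvd_mul hda1 hdb1, ?_⟩
  have hquot : a * b / (da * db) = (a / da) * (b / db) :=
    (Nat.div_mul_div_comm hda1 hdb1).symm
  rw [hquot]
  have cA : Nat.Coprime da (b / db) :=
    Nat.Coprime.coprime_dvd_right (Nat.div_dvd_of_dvd hdb1)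
      (Nat.Coprime.coprime_dvd_left hda1 hab)
  have cB : Nat.Coprime db (a / da) :=
    Nat.Coprime.coprime_dvd_right (Nat.div_dvd_of_dvd hda1)
      (Nat.Coprime.coprime_dvd_left hdb1 hab.symm)
  have hda2' : Nat.Coprime da (a / da) := hda2
  have hdb2' : Nat.Coprime db (b / db) := hdb2
  exact Nat.Coprime.mul (Nat.Coprime.mul_right hda2' cA)
    (Nat.Coprime.mul_right cB hdb2')

lemma gcud_mem {n q : ℕ} (hn : n ≠ 0) (hq : q ≠ 0) :
    gcud n q ∈ uDivisors n ∩ uDivisors q := by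
  have hne : (uDivisors n ∩ uDivisors q).Nonempty :=
    ⟨1, Finset.mem_inter.mpr ⟨one_mem_uDivisors hn, one_mem_uDivisors hq⟩⟩
  obtain ⟨b, hb, hsup⟩ := Finset.exists_mem_eq_sup _ hne id
  rw [gcud, hsup]
  exact hb

lemma le_gcud {n q d : ℕ} (hd : d ∈ uDivisors n ∩ uDivisors q) : d ≤ gcud n q :=
  Finset.le_sup (f := id) hd

lemma mem_pos {d m : ℕ} (hm : m ≠ 0) (hd : d ∈ uDivisors m) : d ≠ 0 := by
  rw [mem_uDivisors hm] at hd
  rintro rfl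
  exact hm (Nat.eq_zero_of_zero_dvd hd.1)

lemma gcud_mul {n a b : ℕ} (hn : n ≠ 0) (ha : a ≠ 0) (hb : b ≠ 0)
    (hab : Nat.Coprime a b) : gcud n (a * b) = gcud n a * gcud n b := by
  have hab0 : a * b ≠ 0 := mul_ne_zero ha hb
  have hg := gcud_mem hn hab0
  rw [Finset.mem_inter] at hg
  obtain ⟨hgn, hgab⟩ := hg
  have hga := gcud_mem hn ha
  have hgb := gcud_mem hn hb
  rw [Finset.mem_inter] at hga hgb
  apply le_antisymm
  · -- decompose gcud n (a*b)
    obtain ⟨hda, hdb, heq⟩ := uDivisors_mul_decomp ha hb hab hgab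
    set g := gcud n (a * b)
    set da := Nat.gcd g a
    set db := Nat.gcd g b
    have hg0 : g ≠ 0 := mem_pos hn hgn
    have hcopd : Nat.Coprime da db :=
      Nat.Coprime.coprime_dvd_left (Nat.gcd_dvd_right g a)
        (Nat.Coprime.coprime_dvd_right (Nat.gcd_dvd_right g b) hab)
    -- da, db are unitary divisors of g
    have hdag : da ∈ uDivisors g := by
      rw [mem_uDivisors hg0]
      refine ⟨Nat.gcd_dvd_left _ _, ?_⟩
      have : g / da = db := by
        rw [heq, Nat.mul_div_cancel_left _
          (Nat.pos_of_ne_zero (mem_pos ha hda))]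
      rw [this]; exact hcopd
    have hdbg : db ∈ uDivisors g := by
      rw [mem_uDivisors hg0]
      refine ⟨Nat.gcd_dvd_left _ _, ?_⟩
      have : g / db = da := by
        rw [heq, mul_comm, Nat.mul_div_cancel_left _
          (Nat.pos_of_ne_zero (mem_pos hb hdb))]
      rw [this]; exact hcopd.symm
    have hdan : da ∈ uDivisors n := uDivisors_trans hn hg0 hdag hgn
    have hdbn : db ∈ uDivisors n := uDivisors_trans hn hg0 hdbg hgn
    have h1 : da ≤ gcud n a := le_gcud (Finset.mem_inter.mpr ⟨hdan, hda⟩)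
    have h2 : db ≤ gcud n b := le_gcud (Finset.mem_inter.mpr ⟨hdbn, hdb⟩)
    calc g = da * db := heq
    _ ≤ gcud n a * gcud n b := Nat.mul_le_mul h1 h2
  · -- gcud n a * gcud n b is a common unitary divisor
    have hcop : Nat.Coprime (gcud n a) (gcud n b) := by
      have h1 : gcud n a ∣ a := ((mem_uDivisors ha).mp hga.2).1
      have h2 : gcud n b ∣ b := ((mem_uDivisors hb).mp hgb.2).1
      exact Nat.Coprime.coprime_dvd_left h1
        (Nat.Coprime.coprime_dvd_right h2 hab)
    have m1 : gcud n a * gcud n b ∈ uDivisors n :=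
      mul_mem_uDivisors hn hcop hga.1 hgb.1
    have m2 : gcud n a * gcud n b ∈ uDivisors (a * b) :=
      mul_mem_uDivisors_mul ha hb hab hga.2 hgb.2
    exact le_gcud (Finset.mem_inter.mpr ⟨m1, m2⟩)

theorem ctilde_multiplicative (n : ℕ) (hn : 0 < n) :
    ctilde 1 n = 1 ∧
      ∀ a b : ℕ, 0 < a → 0 < b → Nat.Coprime a b →
        ctilde (a * b) n = ctilde a n * ctilde b n := by
  have hn0 : n ≠ 0 := hn.ne'
  constructor
  · have h1 : gcud n 1 = 1 := by
      have hmem := gcud_mem hn0 one_ne_zero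
      rw [Finset.mem_inter, uDivisors_one, Finset.mem_singleton] at hmem
      exact hmem.2
    rw [ctilde, h1, uDivisors_one, Finset.sum_singleton]
    simp [mustar_one]
  · intro a b ha hb hab
    have ha0 : a ≠ 0 := ha.ne'
    have hb0 : b ≠ 0 := hb.ne'
    have hgmul := gcud_mul hn0 ha0 hb0 hab
    have hga := (Finset.mem_inter.mp (gcud_mem hn0 ha0)).2
    have hgb := (Finset.mem_inter.mp (gcud_mem hn0 hb0)).2
    have hgaa : gcud n a ∣ a := ((mem_uDivisors ha0).mp hga).1
    have hgbb : gcud n b ∣ b := ((mem_uDivisors hb0).mp hgb).1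
    have hga0 : gcud n a ≠ 0 := mem_pos ha0 hga
    have hgb0 : gcud n b ≠ 0 := mem_pos hb0 hgb
    have hcopg : Nat.Coprime (gcud n a) (gcud n b) :=
      Nat.Coprime.coprime_dvd_left hgaa (Nat.Coprime.coprime_dvd_right hgbb hab)
    rw [ctilde, ctilde, ctilde, hgmul]
    rw [Finset.sum_mul_sum]
    rw [← Finset.sum_product']
    apply Finset.sum_nbij' (fun d => (Nat.gcd d (gcud n a), Nat.gcd d (gcud n b)))
      (fun p => p.1 * p.2)
    · intro d hd
      obtain ⟨h1, h2, _⟩ := uDivisors_mul_decomp hga0 hgb0 hcopg hd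
      exact Finset.mem_product.mpr ⟨h1, h2⟩
    · intro p hp
      rw [Finset.mem_product] at hp
      exact mul_mem_uDivisors_mul hga0 hgb0 hcopg hp.1 hp.2
    · intro d hd
      obtain ⟨_, _, heq⟩ := uDivisors_mul_decomp hga0 hgb0 hcopg hd
      exact heq.symm
    · intro p hp
      rw [Finset.mem_product] at hp
      have h1 : p.1 ∣ gcud n a := ((mem_uDivisors hga0).mp hp.1).1
      have h2 : p.2 ∣ gcud n b := ((mem_uDivisors hgb0).mp hp.2).1
      have hc1 : Nat.Coprime p.1 p.2 :=
        Nat.Coprime.coprime_dvd_left h1 (Nat.Coprime.coprime_dvd_right h2 hcopg)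
      have e1 : Nat.gcd (p.1 * p.2) (gcud n a) = p.1 := by
        rw [Nat.Coprime.gcd_mul_right_cancel p.1
          (Nat.Coprime.coprime_dvd_left h2 hcopg.symm)]
        exact Nat.gcd_eq_left h1
      have e2 : Nat.gcd (p.1 * p.2) (gcud n b) = p.2 := by
        rw [mul_comm, Nat.Coprime.gcd_mul_right_cancel p.2
          (Nat.Coprime.coprime_dvd_left h1 hcopg)]
        exact Nat.gcd_eq_left h2
      rw [e1, e2]
    · intro d hd
      obtain ⟨hmema, hmemb, heq⟩ := uDivisors_mul_decomp hga0 hgb0 hcopg hd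
      set da := Nat.gcd d (gcud n a)
      set db := Nat.gcd d (gcud n b)
      have hdaa : da ∣ a := (((mem_uDivisors hga0).mp hmema).1).trans hgaa
      have hdbb : db ∣ b := (((mem_uDivisors hgb0).mp hmemb).1).trans hgbb
      have hquot : a * b / (da * db) = (a / da) * (b / db) :=
        (Nat.div_mul_div_comm hdaa hdbb).symm
      have hcopq : Nat.Coprime (a / da) (b / db) :=
        Nat.Coprime.coprime_dvd_left (Nat.div_dvd_of_dvd hdaa)
          (Nat.Coprime.coprime_dvd_right (Nat.div_dvd_of_dvd hdbb) hab)
      rw [heq, hquot, mustar_mul hcopq]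
      push_cast
      ring
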